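/- The space TS^c(C*_R⟨x(·)⟩) of tracial states τ on the universal C*-algebra C*_R⟨x(·)⟩ such that all processes t ↦ π_τ(x_{ij}(t)) are strong-operator continuous, equipped with the metric d(τ₁,τ₂) = Σ_{m,ℓ≥1} 2^{−m}(2R)^{−ℓ} max_{w ∈ W_ℓ} sup_{(t₁,…,t_ℓ)∈[0,m]^ℓ} |τ₁(w(t₁,…,t_ℓ)) − τ₂(w(t₁,…,t_ℓ))|, is a complete metric space. -/

import Mathlib

open scoped NNReal

/-- The letters x_{ij}, 1 ≤ i ≤ n+1, 1 ≤ j ≤ r(i). -/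
abbrev Letter (n : ℕ) (r : Fin (n + 1) → ℕ) := Σ i : Fin (n + 1), Fin (r i)

/-- A tracial state on the universal C*-algebra C*_R⟨x(·)⟩ (generated by
self-adjoint elements x_{ij}(t), t ≥ 0, of norm ≤ R) whose GNS processes are
strong-operator continuous, encoded by its moment functional on words.
A word is a list of pairs (letter, time). The fields encode: normalization,
traciality, the *-structure (letters are self-adjoint, so star reverses words),
positivity, the operator norm bound ‖x_{ij}(t)‖ ≤ R (both as the moment growth
bound and as positivity of R² − x_{ij}(t)² in the GNS representation), and
— via Lemma 2.1 — strong-operator continuity of the processes, i.e. joint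
continuity of all moments in the time variables. -/
structure TracialStateC (n : ℕ) (r : Fin (n + 1) → ℕ) (R : ℝ) where
  tr : List (Letter n r × ℝ≥0) → ℂ
  normalized : tr [] = 1
  tracial : ∀ w v : List (Letter n r × ℝ≥0), tr (w ++ v) = tr (v ++ w)
  star_word : ∀ w : List (Letter n r × ℝ≥0), tr w.reverse = starRingEnd ℂ (tr w)
  positive : ∀ (k : ℕ) (ws : Fin k → List (Letter n r × ℝ≥0)) (c : Fin k → ℂ),
    0 ≤ (∑ a, ∑ b, starRingEnd ℂ (c a) * c b * tr ((ws a).reverse ++ ws b)).re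
  norm_bound : ∀ w : List (Letter n r × ℝ≥0), ‖tr w‖ ≤ R ^ w.length
  generator_bound : ∀ (k : ℕ) (ws : Fin k → List (Letter n r × ℝ≥0))
      (c : Fin k → ℂ) (x : Letter n r) (t : ℝ≥0),
    (∑ a, ∑ b, starRingEnd ℂ (c a) * c b *
        tr ((ws a).reverse ++ [(x, t), (x, t)] ++ ws b)).re ≤
      R ^ 2 * (∑ a, ∑ b, starRingEnd ℂ (c a) * c b *
        tr ((ws a).reverse ++ ws b)).re
  moment_continuous : ∀ (ℓ : ℕ) (ls : Fin ℓ → Letter n r),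
    Continuous fun ts : Fin ℓ → ℝ≥0 => tr (List.ofFn fun k => (ls k, ts k))

/-- The metric d(τ₁,τ₂) = Σ_{m,ℓ ≥ 1} 2^{−m}(2R)^{−ℓ} · max_{w ∈ W_ℓ}
sup_{(t₁,…,t_ℓ) ∈ [0,m]^ℓ} |τ₁(w(t₁,…,t_ℓ)) − τ₂(w(t₁,…,t_ℓ))|. -/
noncomputable def trDist {n : ℕ} {r : Fin (n + 1) → ℕ} {R : ℝ}
    (τ₁ τ₂ : TracialStateC n r R) : ℝ :=
  ∑' q : ℕ × ℕ,
    (1 / 2 ^ (q.1 + 1)) * (1 / (2 * R) ^ (q.2 + 1)) *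
      ⨆ ls : Fin (q.2 + 1) → Letter n r,
        ⨆ ts : Fin (q.2 + 1) → (Set.Icc (0 : ℝ≥0) ((q.1 : ℝ≥0) + 1)),
          ‖(τ₁.tr (List.ofFn fun k => (ls k, (ts k : ℝ≥0))) -
              τ₂.tr (List.ofFn fun k => (ls k, (ts k : ℝ≥0))))‖


namespace TrAux

variable {n : ℕ} {r : Fin (n + 1) → ℕ} {R : ℝ}

/-- The weight of the (m, ℓ) term. -/
noncomputable def wt (R : ℝ) (q : ℕ × ℕ) : ℝ :=
  (1 / 2 ^ (q.1 + 1)) * (1 / (2 * R) ^ (q.2 + 1))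

/-- The double sup in the (m, ℓ) term. -/
noncomputable def Sq (τ₁ τ₂ : TracialStateC n r R) (q : ℕ × ℕ) : ℝ :=
  ⨆ ls : Fin (q.2 + 1) → Letter n r,
    ⨆ ts : Fin (q.2 + 1) → (Set.Icc (0 : ℝ≥0) ((q.1 : ℝ≥0) + 1)),
      ‖τ₁.tr (List.ofFn fun k => (ls k, (ts k : ℝ≥0))) -
          τ₂.tr (List.ofFn fun k => (ls k, (ts k : ℝ≥0)))‖

lemma trDist_eq (τ₁ τ₂ : TracialStateC n r R) :
    trDist τ₁ τ₂ = ∑' q : ℕ × ℕ, wt R q * Sq τ₁ τ₂ q := rfl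

lemma wt_pos (hR : 0 < R) (q : ℕ × ℕ) : 0 < wt R q := by
  unfold wt
  positivity

lemma diff_le (τ₁ τ₂ : TracialStateC n r R) {ℓ : ℕ}
    (ls : Fin ℓ → Letter n r) (ts : Fin ℓ → ℝ≥0) :
    ‖τ₁.tr (List.ofFn fun k => (ls k, ts k)) -
      τ₂.tr (List.ofFn fun k => (ls k, ts k))‖ ≤ 2 * R ^ ℓ := by
  calc ‖τ₁.tr (List.ofFn fun k => (ls k, ts k)) -
        τ₂.tr (List.ofFn fun k => (ls k, ts k))‖
      ≤ ‖τ₁.tr (List.ofFn fun k => (ls k, ts k))‖ +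
        ‖τ₂.tr (List.ofFn fun k => (ls k, ts k))‖ :=
        norm_sub_le _ _
    _ ≤ R ^ ℓ + R ^ ℓ := by
        have h₁ := τ₁.norm_bound (List.ofFn fun k => (ls k, ts k))
        have h₂ := τ₂.norm_bound (List.ofFn fun k => (ls k, ts k))
        rw [List.length_ofFn] at h₁ h₂
        exact add_le_add h₁ h₂
    _ = 2 * R ^ ℓ := by ring

lemma Sq_nonneg (τ₁ τ₂ : TracialStateC n r R) (q : ℕ × ℕ) : 0 ≤ Sq τ₁ τ₂ q := by
  apply Real.iSup_nonneg
  intro ls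
  apply Real.iSup_nonneg
  intro ts
  exact norm_nonneg _

lemma Sq_le (τ₁ τ₂ : TracialStateC n r R) (q : ℕ × ℕ) {c : ℝ} (hc : 0 ≤ c)
    (h : ∀ (ls : Fin (q.2 + 1) → Letter n r)
      (ts : Fin (q.2 + 1) → (Set.Icc (0 : ℝ≥0) ((q.1 : ℝ≥0) + 1))),
      ‖τ₁.tr (List.ofFn fun k => (ls k, (ts k : ℝ≥0))) -
          τ₂.tr (List.ofFn fun k => (ls k, (ts k : ℝ≥0)))‖ ≤ c) :
    Sq τ₁ τ₂ q ≤ c := by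
  apply Real.iSup_le _ hc
  intro ls
  exact Real.iSup_le (h ls) hc

lemma hR0 (hR : 0 < R) (ℓ : ℕ) : (0:ℝ) ≤ 2 * R ^ ℓ := by positivity

lemma Sq_le_bound (hR : 0 < R) (τ₁ τ₂ : TracialStateC n r R) (q : ℕ × ℕ) :
    Sq τ₁ τ₂ q ≤ 2 * R ^ (q.2 + 1) :=
  Sq_le τ₁ τ₂ q (hR0 hR _) fun ls ts => diff_le τ₁ τ₂ ls _

/-- point evaluation is at most the sup. -/
lemma le_Sq (hR : 0 < R) (τ₁ τ₂ : TracialStateC n r R) (q : ℕ × ℕ)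
    (ls : Fin (q.2 + 1) → Letter n r)
    (ts : Fin (q.2 + 1) → (Set.Icc (0 : ℝ≥0) ((q.1 : ℝ≥0) + 1))) :
    ‖τ₁.tr (List.ofFn fun k => (ls k, (ts k : ℝ≥0))) -
          τ₂.tr (List.ofFn fun k => (ls k, (ts k : ℝ≥0)))‖ ≤ Sq τ₁ τ₂ q := by
  have hbdd : ∀ ls' : Fin (q.2 + 1) → Letter n r,
      BddAbove (Set.range fun ts' : Fin (q.2 + 1) →
        (Set.Icc (0 : ℝ≥0) ((q.1 : ℝ≥0) + 1)) =>
        ‖τ₁.tr (List.ofFn fun k => (ls' k, (ts' k : ℝ≥0))) -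
            τ₂.tr (List.ofFn fun k => (ls' k, (ts' k : ℝ≥0)))‖) := by
    intro ls'
    refine ⟨2 * R ^ (q.2 + 1), ?_⟩
    rintro x ⟨ts', rfl⟩
    exact diff_le τ₁ τ₂ ls' _
  have h1 : ‖τ₁.tr (List.ofFn fun k => (ls k, (ts k : ℝ≥0))) -
          τ₂.tr (List.ofFn fun k => (ls k, (ts k : ℝ≥0)))‖ ≤
      ⨆ ts' : Fin (q.2 + 1) → (Set.Icc (0 : ℝ≥0) ((q.1 : ℝ≥0) + 1)),
        ‖τ₁.tr (List.ofFn fun k => (ls k, (ts' k : ℝ≥0))) -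
            τ₂.tr (List.ofFn fun k => (ls k, (ts' k : ℝ≥0)))‖ :=
    le_ciSup (hbdd ls) ts
  refine h1.trans ?_
  refine le_ciSup (f := fun ls' : Fin (q.2 + 1) → Letter n r =>
    ⨆ ts' : Fin (q.2 + 1) → (Set.Icc (0 : ℝ≥0) ((q.1 : ℝ≥0) + 1)),
      ‖τ₁.tr (List.ofFn fun k => (ls' k, (ts' k : ℝ≥0))) -
          τ₂.tr (List.ofFn fun k => (ls' k, (ts' k : ℝ≥0)))‖) ?_ ls
  refine ⟨2 * R ^ (q.2 + 1), ?_⟩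
  rintro x ⟨ls', rfl⟩
  exact Real.iSup_le (fun ts' => diff_le τ₁ τ₂ ls' _) (hR0 hR _)

lemma summable_bound :
    Summable (fun q : ℕ × ℕ => (2:ℝ) * ((1/2) ^ (q.1+1) * (1/2) ^ (q.2+1))) := by
  have h : Summable (fun m : ℕ => ((1:ℝ)/2) ^ (m+1)) := by
    have := summable_geometric_two.mul_right (1/2 : ℝ)
    refine this.congr fun m => ?_
    rw [pow_succ]
  exact ((h.mul_of_nonneg h (fun m => by positivity) (fun m => by positivity))).mul_left 2

lemma term_le (hR : 0 < R) (τ₁ τ₂ : TracialStateC n r R) (q : ℕ × ℕ) :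
    wt R q * Sq τ₁ τ₂ q ≤ 2 * ((1/2) ^ (q.1+1) * (1/2) ^ (q.2+1)) := by
  have h1 : wt R q * Sq τ₁ τ₂ q ≤ wt R q * (2 * R ^ (q.2+1)) :=
    mul_le_mul_of_nonneg_left (Sq_le_bound hR τ₁ τ₂ q) (wt_pos hR q).le
  refine h1.trans_eq ?_
  unfold wt
  rw [mul_pow]
  simp only [one_div, inv_pow]
  field_simp

lemma term_nonneg (hR : 0 < R) (τ₁ τ₂ : TracialStateC n r R) (q : ℕ × ℕ) :
    0 ≤ wt R q * Sq τ₁ τ₂ q :=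
  mul_nonneg (wt_pos hR q).le (Sq_nonneg τ₁ τ₂ q)

lemma summable_term (hR : 0 < R) (τ₁ τ₂ : TracialStateC n r R) :
    Summable (fun q : ℕ × ℕ => wt R q * Sq τ₁ τ₂ q) :=
  Summable.of_nonneg_of_le (term_nonneg hR τ₁ τ₂) (term_le hR τ₁ τ₂) summable_bound

/-- key pointwise vs distance bound -/
lemma pointwise_le_trDist (hR : 0 < R) (τ₁ τ₂ : TracialStateC n r R) (q : ℕ × ℕ)
    (ls : Fin (q.2 + 1) → Letter n r)
    (ts : Fin (q.2 + 1) → (Set.Icc (0 : ℝ≥0) ((q.1 : ℝ≥0) + 1))) :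
    wt R q * ‖τ₁.tr (List.ofFn fun k => (ls k, (ts k : ℝ≥0))) -
          τ₂.tr (List.ofFn fun k => (ls k, (ts k : ℝ≥0)))‖ ≤ trDist τ₁ τ₂ := by
  rw [trDist_eq]
  calc wt R q * ‖_‖ ≤ wt R q * Sq τ₁ τ₂ q :=
        mul_le_mul_of_nonneg_left (le_Sq hR τ₁ τ₂ q ls ts) (wt_pos hR q).le
    _ ≤ ∑' q' : ℕ × ℕ, wt R q' * Sq τ₁ τ₂ q' :=
        Summable.le_tsum (summable_term hR τ₁ τ₂) q (fun q' _ => term_nonneg hR τ₁ τ₂ q')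


lemma Sq_symm (τ₁ τ₂ : TracialStateC n r R) (q : ℕ × ℕ) :
    Sq τ₁ τ₂ q = Sq τ₂ τ₁ q := by
  unfold Sq
  congr 1
  funext ls
  congr 1
  funext ts
  rw [norm_sub_rev]

lemma trDist_nonneg (hR : 0 < R) (τ₁ τ₂ : TracialStateC n r R) :
    0 ≤ trDist τ₁ τ₂ := by
  rw [trDist_eq]
  exact tsum_nonneg (term_nonneg hR τ₁ τ₂)

lemma trDist_symm (τ₁ τ₂ : TracialStateC n r R) :
    trDist τ₁ τ₂ = trDist τ₂ τ₁ := by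
  rw [trDist_eq, trDist_eq]
  exact tsum_congr fun q => by rw [Sq_symm]

lemma trDist_triangle (hR : 0 < R) (τ₁ τ₂ τ₃ : TracialStateC n r R) :
    trDist τ₁ τ₃ ≤ trDist τ₁ τ₂ + trDist τ₂ τ₃ := by
  rw [trDist_eq, trDist_eq, trDist_eq]
  rw [← Summable.tsum_add (summable_term hR τ₁ τ₂) (summable_term hR τ₂ τ₃)]
  refine Summable.tsum_le_tsum ?_ (summable_term hR τ₁ τ₃)
    ((summable_term hR τ₁ τ₂).add (summable_term hR τ₂ τ₃))
  intro q
  rw [← mul_add]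
  refine mul_le_mul_of_nonneg_left ?_ (wt_pos hR q).le
  refine Sq_le τ₁ τ₃ q (add_nonneg (Sq_nonneg _ _ _) (Sq_nonneg _ _ _)) ?_
  intro ls ts
  calc ‖_‖ ≤ ‖τ₁.tr (List.ofFn fun k => (ls k, (ts k : ℝ≥0))) -
          τ₂.tr (List.ofFn fun k => (ls k, (ts k : ℝ≥0)))‖ +
        ‖τ₂.tr (List.ofFn fun k => (ls k, (ts k : ℝ≥0))) -
          τ₃.tr (List.ofFn fun k => (ls k, (ts k : ℝ≥0)))‖ := by
        have := norm_sub_le_norm_sub_add_norm_sub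
          (τ₁.tr (List.ofFn fun k => (ls k, (ts k : ℝ≥0))))
          (τ₂.tr (List.ofFn fun k => (ls k, (ts k : ℝ≥0))))
          (τ₃.tr (List.ofFn fun k => (ls k, (ts k : ℝ≥0))))
        exact this
    _ ≤ Sq τ₁ τ₂ q + Sq τ₂ τ₃ q :=
        add_le_add (le_Sq hR τ₁ τ₂ q ls ts) (le_Sq hR τ₂ τ₃ q ls ts)

lemma tr_ext {τ₁ τ₂ : TracialStateC n r R} (h : τ₁.tr = τ₂.tr) : τ₁ = τ₂ := by
  cases τ₁; cases τ₂
  simp_all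

/-- every nonempty word can be represented as an ofFn word with bounded times -/
lemma word_repr (w : List (Letter n r × ℝ≥0)) (hw : w ≠ []) :
    ∃ (ℓ : ℕ) (ls : Fin (ℓ + 1) → Letter n r) (ts : Fin (ℓ + 1) → ℝ≥0) (m : ℕ),
      (∀ k, ts k ≤ (m : ℝ≥0) + 1) ∧
      w = List.ofFn (fun k => (ls k, ts k)) := by
  obtain ⟨ℓ, hℓ⟩ : ∃ ℓ, w.length = ℓ + 1 :=
    Nat.exists_eq_succ_of_ne_zero (by simpa using hw)
  set f : Fin (ℓ + 1) → Letter n r × ℝ≥0 := fun k => w.get (Fin.cast hℓ.symm k) with hf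
  refine ⟨ℓ, fun k => (f k).1, fun k => (f k).2,
    Finset.univ.sup (fun k => ⌈((f k).2 : ℝ≥0)⌉₊), fun k => ?_, ?_⟩
  · have h1 : (f k).2 ≤ (⌈((f k).2 : ℝ≥0)⌉₊ : ℝ≥0) := Nat.le_ceil _
    have h2 : (⌈((f k).2 : ℝ≥0)⌉₊ : ℕ) ≤ Finset.univ.sup (fun k => ⌈((f k).2 : ℝ≥0)⌉₊) :=
      Finset.le_sup (f := fun k => ⌈((f k).2 : ℝ≥0)⌉₊) (Finset.mem_univ k)
    calc (f k).2 ≤ (⌈((f k).2 : ℝ≥0)⌉₊ : ℝ≥0) := h1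
      _ ≤ ((Finset.univ.sup (fun k => ⌈((f k).2 : ℝ≥0)⌉₊) : ℕ) : ℝ≥0) := by
          exact_mod_cast h2
      _ ≤ _ := le_self_add
  · apply List.ext_get
    · simp [hℓ]
    · intro i h1 h2
      simp only [List.get_ofFn]
      rfl

lemma trDist_eq_zero_iff (hR : 0 < R) (τ₁ τ₂ : TracialStateC n r R) :
    trDist τ₁ τ₂ = 0 ↔ τ₁ = τ₂ := by
  constructor
  · intro h
    apply tr_ext
    funext w
    rcases eq_or_ne w [] with rfl | hw
    · rw [τ₁.normalized, τ₂.normalized]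
    obtain ⟨ℓ, ls, ts, m, hts, rfl⟩ := word_repr w hw
    have key := pointwise_le_trDist hR τ₁ τ₂ (m, ℓ) ls
      (fun k => ⟨ts k, ⟨zero_le, hts k⟩⟩)
    rw [h] at key
    have h0 : ‖τ₁.tr (List.ofFn fun k => (ls k, ts k)) -
          τ₂.tr (List.ofFn fun k => (ls k, ts k))‖ ≤ 0 := by
      have hw := wt_pos (R := R) hR (m, ℓ)
      nlinarith [norm_nonneg
        (τ₁.tr (List.ofFn fun k => (ls k, ts k)) -
          τ₂.tr (List.ofFn fun k => (ls k, ts k)))]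
    have := le_antisymm h0 (norm_nonneg _)
    rwa [norm_sub_eq_zero_iff] at this
  · rintro rfl
    rw [trDist_eq]
    convert tsum_zero with q
    have : Sq τ₁ τ₁ q = 0 := by
      refine le_antisymm (Sq_le _ _ _ le_rfl ?_) (Sq_nonneg _ _ _)
      intro ls ts
      simp
    rw [this, mul_zero]


open Filter in
lemma pointwise_le_trDist' (hR : 0 < R) (τ₁ τ₂ : TracialStateC n r R) (m ℓ : ℕ)
    (ls : Fin (ℓ + 1) → Letter n r) (ts : Fin (ℓ + 1) → ℝ≥0)
    (hts : ∀ k, ts k ≤ (m : ℝ≥0) + 1) :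
    wt R (m, ℓ) * ‖τ₁.tr (List.ofFn fun k => (ls k, ts k)) -
          τ₂.tr (List.ofFn fun k => (ls k, ts k))‖ ≤ trDist τ₁ τ₂ :=
  pointwise_le_trDist hR τ₁ τ₂ (m, ℓ) ls (fun k => ⟨ts k, ⟨zero_le, hts k⟩⟩)

lemma le_Sq' (hR : 0 < R) (τ₁ τ₂ : TracialStateC n r R) (m ℓ : ℕ)
    (ls : Fin (ℓ + 1) → Letter n r) (ts : Fin (ℓ + 1) → ℝ≥0)
    (hts : ∀ k, ts k ≤ (m : ℝ≥0) + 1) :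
    ‖τ₁.tr (List.ofFn fun k => (ls k, ts k)) -
          τ₂.tr (List.ofFn fun k => (ls k, ts k))‖ ≤ Sq τ₁ τ₂ (m, ℓ) :=
  le_Sq hR τ₁ τ₂ (m, ℓ) ls (fun k => ⟨ts k, ⟨zero_le, hts k⟩⟩)

open Filter Topology in
lemma trDist_complete (hR : 0 < R) (u : ℕ → TracialStateC n r R)
    (hC : ∀ ε : ℝ, 0 < ε → ∃ K : ℕ, ∀ a b : ℕ, K ≤ a → K ≤ b →
      trDist (u a) (u b) < ε) :
    ∃ τ : TracialStateC n r R,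
      Tendsto (fun a => trDist (u a) τ) atTop (𝓝 0) := by
  -- Step 1: pointwise Cauchy
  have hcau : ∀ w : List (Letter n r × ℝ≥0), CauchySeq (fun a => (u a).tr w) := by
    intro w
    rcases eq_or_ne w [] with rfl | hw
    · have : (fun a => (u a).tr []) = fun _ => (1 : ℂ) := by
        funext a; exact (u a).normalized
      rw [this]
      exact cauchySeq_const 1
    obtain ⟨ℓ, ls, ts, m, hts, rfl⟩ := word_repr w hw
    rw [Metric.cauchySeq_iff]
    intro ε hε
    have hwt := wt_pos (R := R) hR (m, ℓ)
    obtain ⟨K, hK⟩ := hC (ε * wt R (m, ℓ)) (by positivity)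
    refine ⟨K, fun a ha b hb => ?_⟩
    have h1 := pointwise_le_trDist' hR (u a) (u b) m ℓ ls ts hts
    have h2 := hK a b ha hb
    rw [Complex.dist_eq]
    nlinarith [norm_nonneg
      ((u a).tr (List.ofFn fun k => (ls k, ts k)) -
        (u b).tr (List.ofFn fun k => (ls k, ts k)))]
  have hlim : ∀ w : List (Letter n r × ℝ≥0),
      ∃ z : ℂ, Tendsto (fun a => (u a).tr w) atTop (𝓝 z) :=
    fun w => cauchySeq_tendsto_of_complete (hcau w)
  choose L hL using hlim
  -- Step 2: the limit is a tracial state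
  have hnorm : L [] = 1 := by
    refine tendsto_nhds_unique (hL []) ?_
    have : (fun a => (u a).tr []) = fun _ => (1 : ℂ) := by
      funext a; exact (u a).normalized
    rw [this]; exact tendsto_const_nhds
  have htrac : ∀ w v : List (Letter n r × ℝ≥0), L (w ++ v) = L (v ++ w) := by
    intro w v
    refine tendsto_nhds_unique (hL (w ++ v)) ?_
    have : (fun a => (u a).tr (w ++ v)) = fun a => (u a).tr (v ++ w) := by
      funext a; exact (u a).tracial w v
    rw [this]; exact hL (v ++ w)
  have hstar : ∀ w : List (Letter n r × ℝ≥0),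
      L w.reverse = starRingEnd ℂ (L w) := by
    intro w
    refine tendsto_nhds_unique (hL w.reverse) ?_
    have : (fun a => (u a).tr w.reverse) =
        fun a => starRingEnd ℂ ((u a).tr w) := by
      funext a; exact (u a).star_word w
    rw [this]
    exact (Complex.continuous_conj.tendsto _).comp (hL w)
  have hpos : ∀ (k : ℕ) (ws : Fin k → List (Letter n r × ℝ≥0)) (c : Fin k → ℂ),
      0 ≤ (∑ a, ∑ b, starRingEnd ℂ (c a) * c b *
        L ((ws a).reverse ++ ws b)).re := by
    intro k ws c
    have hT : Tendsto (fun x => (∑ a, ∑ b, starRingEnd ℂ (c a) * c b *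
        (u x).tr ((ws a).reverse ++ ws b)).re) atTop
        (𝓝 ((∑ a, ∑ b, starRingEnd ℂ (c a) * c b *
          L ((ws a).reverse ++ ws b)).re)) := by
      refine (Complex.continuous_re.tendsto _).comp ?_
      refine tendsto_finset_sum _ fun a _ => ?_
      refine tendsto_finset_sum _ fun b _ => ?_
      exact (hL _).const_mul _
    exact ge_of_tendsto' hT fun x => (u x).positive k ws c
  have hnb : ∀ w : List (Letter n r × ℝ≥0), ‖L w‖ ≤ R ^ w.length := by
    intro w
    have hT : Tendsto (fun a => ‖(u a).tr w‖) atTop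
        (𝓝 (‖L w‖)) := (continuous_norm.tendsto _).comp (hL w)
    exact le_of_tendsto' hT fun a => (u a).norm_bound w
  have hgb : ∀ (k : ℕ) (ws : Fin k → List (Letter n r × ℝ≥0))
      (c : Fin k → ℂ) (x : Letter n r) (t : ℝ≥0),
      (∑ a, ∑ b, starRingEnd ℂ (c a) * c b *
          L ((ws a).reverse ++ [(x, t), (x, t)] ++ ws b)).re ≤
        R ^ 2 * (∑ a, ∑ b, starRingEnd ℂ (c a) * c b *
          L ((ws a).reverse ++ ws b)).re := by
    intro k ws c x t
    have hT1 : Tendsto (fun y => (∑ a, ∑ b, starRingEnd ℂ (c a) * c b *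
        (u y).tr ((ws a).reverse ++ [(x, t), (x, t)] ++ ws b)).re) atTop
        (𝓝 ((∑ a, ∑ b, starRingEnd ℂ (c a) * c b *
          L ((ws a).reverse ++ [(x, t), (x, t)] ++ ws b)).re)) := by
      refine (Complex.continuous_re.tendsto _).comp ?_
      refine tendsto_finset_sum _ fun a _ => ?_
      refine tendsto_finset_sum _ fun b _ => ?_
      exact (hL _).const_mul _
    have hT2 : Tendsto (fun y => R ^ 2 * (∑ a, ∑ b, starRingEnd ℂ (c a) * c b *
        (u y).tr ((ws a).reverse ++ ws b)).re) atTop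
        (𝓝 (R ^ 2 * (∑ a, ∑ b, starRingEnd ℂ (c a) * c b *
          L ((ws a).reverse ++ ws b)).re)) := by
      refine Tendsto.const_mul _ ?_
      refine (Complex.continuous_re.tendsto _).comp ?_
      refine tendsto_finset_sum _ fun a _ => ?_
      refine tendsto_finset_sum _ fun b _ => ?_
      exact (hL _).const_mul _
    exact le_of_tendsto_of_tendsto' hT1 hT2 fun y => (u y).generator_bound k ws c x t
  have hmc : ∀ (ℓ : ℕ) (ls : Fin ℓ → Letter n r),
      Continuous fun ts : Fin ℓ → ℝ≥0 => L (List.ofFn fun k => (ls k, ts k)) := by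
    intro ℓ ls
    match ℓ with
    | 0 =>
      have : (fun ts : Fin 0 → ℝ≥0 => L (List.ofFn fun k => (ls k, ts k))) =
          fun _ => L [] := by
        funext ts; congr 1
      rw [this]; exact continuous_const
    | (ℓ' + 1) =>
      rw [continuous_iff_continuousAt]
      intro ts₀
      set m : ℕ := Finset.univ.sup (fun k => ⌈(ts₀ k : ℝ≥0)⌉₊) with hm_def
      have hm : ∀ k, ts₀ k < (m : ℝ≥0) + 1 := by
        intro k
        have h1 : ts₀ k ≤ (⌈(ts₀ k : ℝ≥0)⌉₊ : ℝ≥0) := Nat.le_ceil _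
        have h2 : (⌈(ts₀ k : ℝ≥0)⌉₊ : ℕ) ≤ m :=
          Finset.le_sup (f := fun k => ⌈(ts₀ k : ℝ≥0)⌉₊) (Finset.mem_univ k)
        have h3 : ts₀ k ≤ (m : ℝ≥0) := h1.trans (by exact_mod_cast h2)
        exact lt_of_le_of_lt h3 (lt_add_of_pos_right _ one_pos)
      set U : Set (Fin (ℓ' + 1) → ℝ≥0) := {ts | ∀ k, ts k < (m : ℝ≥0) + 1} with hU_def
      have hUopen : IsOpen U := by
        have : U = ⋂ k, (fun ts : Fin (ℓ' + 1) → ℝ≥0 => ts k) ⁻¹'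
            Set.Iio ((m : ℝ≥0) + 1) := by
          ext ts; simp [hU_def, Set.mem_iInter]
        rw [this]
        exact isOpen_iInter_of_finite fun k =>
          (continuous_apply k).isOpen_preimage _ isOpen_Iio
      have hU₀ : ts₀ ∈ U := hm
      have hunif : TendstoUniformlyOn
          (fun a ts => (u a).tr (List.ofFn fun k => (ls k, ts k)))
          (fun ts => L (List.ofFn fun k => (ls k, ts k))) atTop U := by
        rw [Metric.tendstoUniformlyOn_iff]
        intro ε hε
        have hwt := wt_pos (R := R) hR (m, ℓ')
        obtain ⟨K, hK⟩ := hC (ε / 2 * wt R (m, ℓ')) (by positivity)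
        rw [eventually_atTop]
        refine ⟨K, fun a ha ts hts => ?_⟩
        have hb : ∀ b, K ≤ b → ‖(u b).tr (List.ofFn fun k => (ls k, ts k)) -
              (u a).tr (List.ofFn fun k => (ls k, ts k))‖ ≤ ε / 2 := by
          intro b hbK
          have h1 := pointwise_le_trDist' hR (u b) (u a) m ℓ' ls ts
            (fun k => (hts k).le)
          have h2 := hK b a hbK ha
          nlinarith [norm_nonneg
            ((u b).tr (List.ofFn fun k => (ls k, ts k)) -
              (u a).tr (List.ofFn fun k => (ls k, ts k)))]
        have hT : Tendsto (fun b => ‖(u b).tr (List.ofFn fun k => (ls k, ts k)) -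
              (u a).tr (List.ofFn fun k => (ls k, ts k))‖) atTop
            (𝓝 (‖L (List.ofFn fun k => (ls k, ts k)) -
                (u a).tr (List.ofFn fun k => (ls k, ts k))‖)) :=
          (continuous_norm.tendsto _).comp
            ((hL _).sub tendsto_const_nhds)
        have hfin : ‖L (List.ofFn fun k => (ls k, ts k)) -
              (u a).tr (List.ofFn fun k => (ls k, ts k))‖ ≤ ε / 2 :=
          le_of_tendsto hT (eventually_atTop.2 ⟨K, hb⟩)
        rw [Complex.dist_eq]
        linarith
      have hcont : ∀ᶠ a in atTop, ContinuousOn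
          (fun ts => (u a).tr (List.ofFn fun k => (ls k, ts k))) U :=
        Filter.Eventually.of_forall fun a =>
          ((u a).moment_continuous _ ls).continuousOn
      exact (hunif.continuousOn hcont.frequently).continuousAt (hUopen.mem_nhds hU₀)
  refine ⟨⟨L, hnorm, htrac, hstar, hpos, hnb, hgb, hmc⟩, ?_⟩
  set τ : TracialStateC n r R := ⟨L, hnorm, htrac, hstar, hpos, hnb, hgb, hmc⟩
    with hτ_def
  -- Step 3: selection lemma
  have hsel : ∀ (a : ℕ) (q : ℕ × ℕ) (δ' : ℝ), 0 < δ' →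
      ∃ (v : ℝ) (g : ℕ → ℝ),
        wt R q * Sq (u a) τ q ≤ v + δ' ∧
        Tendsto g atTop (𝓝 v) ∧
        ∀ b, g b ≤ wt R q * Sq (u a) (u b) q := by
    intro a q δ' hδ'
    have hwt := wt_pos (R := R) hR q
    rcases le_or_gt (Sq (u a) τ q) 0 with hle | hposq
    · refine ⟨0, fun _ => 0, by nlinarith, tendsto_const_nhds,
        fun b => mul_nonneg hwt.le (Sq_nonneg _ _ _)⟩
    · have hne : Nonempty (Fin (q.2 + 1) → Letter n r) := by
        by_contra h
        rw [not_nonempty_iff] at h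
        have h0 : Sq (u a) τ q = 0 := Real.iSup_of_isEmpty _
        linarith
      have hlt : Sq (u a) τ q - δ' / wt R q < Sq (u a) τ q :=
        sub_lt_self _ (by positivity)
      obtain ⟨ls, hls⟩ := exists_lt_of_lt_ciSup hlt
      haveI : Nonempty (Set.Icc (0 : ℝ≥0) ((q.1 : ℝ≥0) + 1)) :=
        ⟨⟨0, ⟨le_rfl, zero_le⟩⟩⟩
      obtain ⟨ts, hts⟩ := exists_lt_of_lt_ciSup hls
      refine ⟨wt R q * ‖(u a).tr (List.ofFn fun k => (ls k, (ts k : ℝ≥0))) -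
            τ.tr (List.ofFn fun k => (ls k, (ts k : ℝ≥0)))‖,
        fun b => wt R q * ‖(u a).tr (List.ofFn fun k => (ls k, (ts k : ℝ≥0))) -
            (u b).tr (List.ofFn fun k => (ls k, (ts k : ℝ≥0)))‖, ?_, ?_, ?_⟩
      · have h5 := mul_lt_mul_of_pos_left hts hwt
        rw [mul_sub, mul_div_cancel₀ _ hwt.ne'] at h5
        linarith
      · refine Tendsto.const_mul _ ?_
        refine (continuous_norm.tendsto _).comp ?_
        exact tendsto_const_nhds.sub (hL _)
      · intro b
        exact mul_le_mul_of_nonneg_left (le_Sq hR (u a) (u b) q ls ts) hwt.le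
  -- Step 4: convergence in trDist
  have hmain : ∀ ε : ℝ, 0 < ε → ∃ K : ℕ, ∀ a, K ≤ a → trDist (u a) τ ≤ ε := by
    intro ε hε
    obtain ⟨K, hK⟩ := hC (ε / 2) (by positivity)
    refine ⟨K, fun a ha => ?_⟩
    rw [trDist_eq]
    refine Summable.tsum_le_of_sum_le (summable_term hR (u a) τ) fun S => ?_
    refine le_of_forall_pos_lt_add fun δ hδ =>
      lt_of_le_of_lt (?_ : _ ≤ ε + δ / 2) (by linarith)
    set δ' : ℝ := δ / 2 / (S.card + 1) with hδ'_def
    have hδ' : 0 < δ' := by positivity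
    choose v g hv hg hgbd using fun q => hsel a q δ' hδ'
    have h1 : ∑ q ∈ S, wt R q * Sq (u a) τ q ≤ ∑ q ∈ S, v q + S.card * δ' := by
      calc ∑ q ∈ S, wt R q * Sq (u a) τ q ≤ ∑ q ∈ S, (v q + δ') :=
            Finset.sum_le_sum fun q _ => hv q
        _ = ∑ q ∈ S, v q + S.card * δ' := by
            rw [Finset.sum_add_distrib, Finset.sum_const, nsmul_eq_mul]
    have h2 : ∑ q ∈ S, v q ≤ ε / 2 := by
      have hT : Tendsto (fun b => ∑ q ∈ S, g q b) atTop (𝓝 (∑ q ∈ S, v q)) :=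
        tendsto_finset_sum S fun q _ => hg q
      refine le_of_tendsto hT ?_
      rw [eventually_atTop]
      refine ⟨K, fun b hb => ?_⟩
      calc ∑ q ∈ S, g q b ≤ ∑ q ∈ S, wt R q * Sq (u a) (u b) q :=
            Finset.sum_le_sum fun q _ => hgbd q b
        _ ≤ ∑' q : ℕ × ℕ, wt R q * Sq (u a) (u b) q :=
            Summable.sum_le_tsum S (fun q _ => term_nonneg hR _ _ q) (summable_term hR _ _)
        _ = trDist (u a) (u b) := (trDist_eq _ _).symm
        _ ≤ ε / 2 := (hK a b ha hb).le
    have h3 : (S.card : ℝ) * δ' ≤ δ / 2 := by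
      rw [hδ'_def]
      rw [mul_div_assoc']
      rw [div_le_iff₀ (by positivity)]
      have : (S.card : ℝ) ≤ S.card + 1 := by linarith
      nlinarith [hδ.le]
    linarith
  rw [Metric.tendsto_atTop]
  intro ε hε
  obtain ⟨K, hK⟩ := hmain (ε / 2) (by positivity)
  refine ⟨K, fun a ha => ?_⟩
  rw [Real.dist_eq, sub_zero, abs_of_nonneg (trDist_nonneg hR _ _)]
  linarith [hK a ha]

end TrAux

/-- Lemma 2.2(1): (TS^c(C*_R⟨x(·)⟩), d) is a complete metric space: d is a
metric, and every d-Cauchy sequence d-converges. -/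
theorem trDist_complete_metric (n : ℕ) (r : Fin (n + 1) → ℕ) (R : ℝ)
    (hR : 0 < R) :
    (∀ τ₁ τ₂ : TracialStateC n r R, 0 ≤ trDist τ₁ τ₂) ∧
    (∀ τ₁ τ₂ : TracialStateC n r R, trDist τ₁ τ₂ = 0 ↔ τ₁ = τ₂) ∧
    (∀ τ₁ τ₂ : TracialStateC n r R, trDist τ₁ τ₂ = trDist τ₂ τ₁) ∧
    (∀ τ₁ τ₂ τ₃ : TracialStateC n r R,
      trDist τ₁ τ₃ ≤ trDist τ₁ τ₂ + trDist τ₂ τ₃) ∧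
    (∀ u : ℕ → TracialStateC n r R,
      (∀ ε : ℝ, 0 < ε → ∃ K : ℕ, ∀ a b : ℕ, K ≤ a → K ≤ b →
        trDist (u a) (u b) < ε) →
      ∃ τ : TracialStateC n r R,
        Filter.Tendsto (fun a => trDist (u a) τ) Filter.atTop (nhds 0)) := by
  exact ⟨fun τ₁ τ₂ => TrAux.trDist_nonneg hR τ₁ τ₂,
    fun τ₁ τ₂ => TrAux.trDist_eq_zero_iff hR τ₁ τ₂,
    fun τ₁ τ₂ => TrAux.trDist_symm τ₁ τ₂,
    fun τ₁ τ₂ τ₃ => TrAux.trDist_triangle hR τ₁ τ₂ τ₃,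
    fun u hC => TrAux.trDist_complete hR u hC⟩
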